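/- Fix σ ∈ S_n and let F map τ ∈ {τ ∈ S_{nm} : τ²σ⁻¹ ∈ S_m^n} to the n×n matrix with entries F(τ)_{ij} = #(P_i ∩ τ(P_j)). Then F takes values in {A ∈ M(n,m) : σ·A^T = A}, is surjective onto this set, and every fiber of F has exactly (m!)^n elements. -/

import Mathlib

open Matrix

/-- The index of the block `P_i = {(i-1)m+1, ..., im}` (in 0-indexed terms, the block
`{im, ..., im+m-1}`) containing `k ∈ {1, ..., nm}`. -/
def blk {n m : ℕ} (hm : 0 < m) (k : Fin (n * m)) : Fin n :=
  ⟨(k : ℕ) / m, (Nat.div_lt_iff_lt_mul hm).mpr k.isLt⟩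

/-- The matrix `F(τ)` with entries `F(τ)_{ij} = #(P_i ∩ τ(P_j))`. -/
noncomputable def Fmap {n m : ℕ} (hm : 0 < m) (τ : Equiv.Perm (Fin (n * m))) :
    Matrix (Fin n) (Fin n) ℕ :=
  fun i j => Nat.card {k : Fin (n * m) // blk hm k = i ∧ blk hm (τ.symm k) = j}

namespace Stmt4Aux

variable {n m : ℕ}

/-- block/position equivalence -/
def Dq (hm : 0 < m) : Fin (n * m) ≃ Fin n × Fin m where
  toFun k := (blk hm k, ⟨(k : ℕ) % m, Nat.mod_lt _ hm⟩)
  invFun z := ⟨(z.1 : ℕ) * m + (z.2 : ℕ), by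
    have h1 : (z.1 : ℕ) + 1 ≤ n := z.1.isLt
    have h2 : (z.2 : ℕ) < m := z.2.isLt
    calc (z.1 : ℕ) * m + (z.2 : ℕ) < ((z.1 : ℕ) + 1) * m := by nlinarith
    _ ≤ n * m := Nat.mul_le_mul_right m h1⟩
  left_inv k := by
    apply Fin.ext
    show (k : ℕ) / m * m + (k : ℕ) % m = (k : ℕ)
    rw [mul_comm]
    exact Nat.div_add_mod _ _
  right_inv z := by
    obtain ⟨z1, z2⟩ := z
    have h2 : (z2 : ℕ) < m := z2.isLt
    have e1 : ((z1 : ℕ) * m + (z2 : ℕ)) / m = (z1 : ℕ) := by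
      rw [add_comm, Nat.add_mul_div_right _ _ hm, Nat.div_eq_of_lt h2, zero_add]
    have e2 : ((z1 : ℕ) * m + (z2 : ℕ)) % m = (z2 : ℕ) := by
      rw [add_comm, Nat.add_mul_mod_self_right, Nat.mod_eq_of_lt h2]
    refine Prod.ext ?_ ?_
    · exact Fin.ext e1
    · exact Fin.ext e2

@[simp] lemma Dq_fst (hm : 0 < m) (k : Fin (n * m)) : (Dq hm k).1 = blk hm k := rfl

@[simp] lemma blk_Dq_symm (hm : 0 < m) (z : Fin n × Fin m) :
    blk hm ((Dq hm).symm z) = z.1 := by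
  have h := congrArg Prod.fst ((Dq hm).apply_symm_apply z)
  rw [Dq_fst] at h
  exact h

def sndEquiv {α β : Type*} (a : α) : {z : α × β // z.1 = a} ≃ β where
  toFun z := z.1.2
  invFun b := ⟨(a, b), rfl⟩
  left_inv := by rintro ⟨⟨x, y⟩, rfl⟩; rfl
  right_inv b := rfl

def prodFiber {α β : Type*} (P : α × β → Prop) (a : α) :
    {p : β // P (a, p)} ≃ {z : α × β // z.1 = a ∧ P z} where
  toFun x := ⟨(a, x.1), rfl, x.2⟩
  invFun z := ⟨z.1.2, by obtain ⟨⟨x, y⟩, rfl, h⟩ := z; exact h⟩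
  left_inv := by rintro ⟨p, h⟩; rfl
  right_inv := by rintro ⟨⟨x, y⟩, rfl, h⟩; rfl

def sigmaFst {ι : Type*} {X : ι → Type*} (c : ι) :
    {s : Σ l, X l // s.1 = c} ≃ X c where
  toFun s := s.2 ▸ s.1.2
  invFun x := ⟨⟨c, x⟩, rfl⟩
  left_inv := by rintro ⟨⟨l, x⟩, rfl⟩; rfl
  right_inv x := rfl

lemma card_blk (hm : 0 < m) (i : Fin n) :
    Nat.card {k : Fin (n * m) // blk hm k = i} = m := by
  rw [Nat.card_congr ((Equiv.subtypeEquiv (p := fun k => blk hm k = i)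
    (q := fun z => z.1 = i) (Dq hm) (fun k => Iff.rfl)).trans (sndEquiv i))]
  simp


section Part1

variable (hm : 0 < m) (τ : Equiv.Perm (Fin (n * m)))

def rowE (i : Fin n) :
    (Σ j : Fin n, {k : Fin (n * m) // blk hm k = i ∧ blk hm (τ.symm k) = j}) ≃
      {k : Fin (n * m) // blk hm k = i} where
  toFun x := ⟨x.2.1, x.2.2.1⟩
  invFun k := ⟨blk hm (τ.symm k.1), ⟨k.1, k.2, rfl⟩⟩
  left_inv := by rintro ⟨j, k, h1, rfl⟩; rfl
  right_inv := by rintro ⟨k, h⟩; rfl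

def colE (j : Fin n) :
    (Σ i : Fin n, {k : Fin (n * m) // blk hm k = i ∧ blk hm (τ.symm k) = j}) ≃
      {k : Fin (n * m) // blk hm (τ.symm k) = j} where
  toFun x := ⟨x.2.1, x.2.2.2⟩
  invFun k := ⟨blk hm k.1, ⟨k.1, rfl, k.2⟩⟩
  left_inv := by rintro ⟨i, k, rfl, h2⟩; rfl
  right_inv := by rintro ⟨k, h⟩; rfl

lemma row_sum (i : Fin n) : ∑ j, Fmap hm τ i j = m := by
  classical
  have h1 : ∀ j, Fmap hm τ i j =
      Fintype.card {k : Fin (n * m) // blk hm k = i ∧ blk hm (τ.symm k) = j} := by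
    intro j; rw [Fmap, Nat.card_eq_fintype_card]
  calc ∑ j, Fmap hm τ i j
      = ∑ j, Fintype.card {k : Fin (n * m) // blk hm k = i ∧ blk hm (τ.symm k) = j} := by
        simp_rw [h1]
    _ = Fintype.card (Σ j : Fin n, {k : Fin (n * m) // blk hm k = i ∧ blk hm (τ.symm k) = j}) :=
        Fintype.card_sigma.symm
    _ = Fintype.card {k : Fin (n * m) // blk hm k = i} := Fintype.card_congr (rowE hm τ i)
    _ = m := by rw [← Nat.card_eq_fintype_card]; exact card_blk hm i

lemma col_sum (j : Fin n) : ∑ i, Fmap hm τ i j = m := by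
  classical
  have h1 : ∀ i, Fmap hm τ i j =
      Fintype.card {k : Fin (n * m) // blk hm k = i ∧ blk hm (τ.symm k) = j} := by
    intro i; rw [Fmap, Nat.card_eq_fintype_card]
  calc ∑ i, Fmap hm τ i j
      = ∑ i, Fintype.card {k : Fin (n * m) // blk hm k = i ∧ blk hm (τ.symm k) = j} := by
        simp_rw [h1]
    _ = Fintype.card (Σ i : Fin n, {k : Fin (n * m) // blk hm k = i ∧ blk hm (τ.symm k) = j}) :=
        Fintype.card_sigma.symm
    _ = Fintype.card {k : Fin (n * m) // blk hm (τ.symm k) = j} := Fintype.card_congr (colE hm τ j)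
    _ = m := by
        rw [← Nat.card_eq_fintype_card,
          Nat.card_congr (Equiv.subtypeEquiv (p := fun k => blk hm (τ.symm k) = j)
            (q := fun k => blk hm k = j) τ.symm (fun k => Iff.rfl))]
        exact card_blk hm j

lemma symm_prop {σ : Equiv.Perm (Fin n)}
    (hb : ∀ k, blk hm (τ (τ k)) = σ (blk hm k)) (i j : Fin n) :
    Fmap hm τ j (σ⁻¹ i) = Fmap hm τ i j := by
  have key : ∀ k, blk hm (τ k) = σ (blk hm (τ.symm k)) := by
    intro k
    have h := hb (τ.symm k)
    rwa [Equiv.apply_symm_apply] at h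
  exact Nat.card_congr (Equiv.subtypeEquiv
    (p := fun k => blk hm k = j ∧ blk hm (τ.symm k) = σ⁻¹ i)
    (q := fun k => blk hm k = i ∧ blk hm (τ.symm k) = j)
    τ (fun k => by
      simp only [Equiv.symm_apply_apply]
      constructor
      · rintro ⟨h1, h2⟩
        refine ⟨?_, h1⟩
        rw [key k, h2]
        simp
      · rintro ⟨h1, h2⟩
        refine ⟨h2, ?_⟩
        have hk := key k
        rw [h1] at hk
        rw [hk]
        simp))

end Part1


section Part3

variable (σ : Equiv.Perm (Fin n)) (A : Matrix (Fin n) (Fin n) ℕ)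

/-- block functions with prescribed fiber counts -/
abbrev BB := ∀ i : Fin n, {f : Fin m → Fin n // ∀ l, Nat.card {p : Fin m // f p = l} = A l i}

abbrev Fb (b : BB (m := m) A) (i l : Fin n) := {p : Fin m // (b i).1 p = l}

abbrev G1 (b : BB (m := m) A) := ∀ i l, Fb A b i l ≃ Fb A b l (σ i)

abbrev G2 (b : BB (m := m) A) := ∀ i l, Fb A b i l ≃ Fin (A l i)

/-- the fiber, conjugated to live on `Fin n × Fin m` -/
abbrev FibS := {s : Equiv.Perm (Fin n × Fin m) // (∀ z, (s (s z)).1 = σ z.1) ∧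
  ∀ i j, Nat.card {z : Fin n × Fin m // z.1 = i ∧ (s.symm z).1 = j} = A i j}

variable {σ A}

def s0 (b : BB (m := m) A) (g : G1 σ A b) : Fin n × Fin m → Fin n × Fin m :=
  fun z => ((b z.1).1 z.2, (g z.1 ((b z.1).1 z.2) ⟨z.2, rfl⟩).1)

def s1 (b : BB (m := m) A) (g : G1 σ A b) : Fin n × Fin m → Fin n × Fin m :=
  fun w => (σ.symm ((b w.1).1 w.2),
    ((g (σ.symm ((b w.1).1 w.2)) w.1).symm ⟨w.2, by simp⟩).1)

lemma s0_eq (b : BB (m := m) A) (g : G1 σ A b) (z : Fin n × Fin m) (l : Fin n)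
    (hl : (b z.1).1 z.2 = l) : s0 b g z = (l, (g z.1 l ⟨z.2, hl⟩).1) := by
  subst hl; rfl

lemma s1_eq (b : BB (m := m) A) (g : G1 σ A b) (w : Fin n × Fin m) (i : Fin n)
    (hi : (b w.1).1 w.2 = σ i) : s1 b g w = (i, ((g i w.1).symm ⟨w.2, hi⟩).1) := by
  have h : σ.symm ((b w.1).1 w.2) = i := by rw [hi]; exact σ.symm_apply_apply i
  unfold s1
  subst h
  rfl

def mkS (b : BB (m := m) A) (g : G1 σ A b) : Equiv.Perm (Fin n × Fin m) where
  toFun := s0 b g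
  invFun := s1 b g
  left_inv := by
    rintro ⟨i, p⟩
    have hq := (g i ((b i).1 p) ⟨p, rfl⟩).2
    rw [show s0 b g (i, p) = (((b i).1 p), (g i ((b i).1 p) ⟨p, rfl⟩).1) from rfl]
    rw [s1_eq b g _ i hq]
    have h2 : (⟨(g i ((b i).1 p) ⟨p, rfl⟩).1, hq⟩ : Fb A b ((b i).1 p) (σ i)) =
        g i ((b i).1 p) ⟨p, rfl⟩ := rfl
    rw [h2, Equiv.symm_apply_apply]
  right_inv := by
    rintro ⟨l, p⟩
    have hx := ((g (σ.symm ((b l).1 p)) l).symm ⟨p, by simp⟩).2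
    rw [show s1 b g (l, p) = (σ.symm ((b l).1 p),
      ((g (σ.symm ((b l).1 p)) l).symm ⟨p, by simp⟩).1) from rfl]
    rw [s0_eq b g _ l hx]
    show (l, ((g (σ.symm ((b l).1 p)) l)
      ((g (σ.symm ((b l).1 p)) l).symm ⟨p, by simp⟩)).1) = (l, p)
    exact Prod.ext rfl (congrArg Subtype.val (Equiv.apply_symm_apply _ _))

lemma mkS_mem (hs : ∀ i j, A (σ i) j = A j i) (b : BB (m := m) A) (g : G1 σ A b) :
    (∀ z, ((mkS b g) ((mkS b g) z)).1 = σ z.1) ∧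
      ∀ i j, Nat.card {z : Fin n × Fin m // z.1 = i ∧ ((mkS b g).symm z).1 = j} = A i j := by
  constructor
  · intro z
    exact (g z.1 ((b z.1).1 z.2) ⟨z.2, rfl⟩).2
  · intro i j
    have e1 : {z : Fin n × Fin m // z.1 = i ∧ ((mkS b g).symm z).1 = j} ≃
        {p : Fin m // σ.symm ((b i).1 p) = j} :=
      (prodFiber (fun z => σ.symm ((b z.1).1 z.2) = j) i).symm
    have e2 : {p : Fin m // σ.symm ((b i).1 p) = j} ≃ {p : Fin m // (b i).1 p = σ j} :=
      Equiv.subtypeEquiv (Equiv.refl _) (fun p => by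
        simp only [Equiv.refl_apply]
        exact Equiv.symm_apply_eq σ)
    rw [Nat.card_congr (e1.trans e2), (b i).2 (σ j), hs j i]

def fwdB (x : FibS (m := m) σ A) : BB (m := m) A := fun i =>
  ⟨fun p => ((x.1) (i, p)).1, fun l => by
    have e1 : {p : Fin m // (x.1 (i, p)).1 = l} ≃
        {z : Fin n × Fin m // z.1 = i ∧ (x.1 z).1 = l} :=
      prodFiber (fun z => (x.1 z).1 = l) i
    have e2 : {z : Fin n × Fin m // z.1 = i ∧ (x.1 z).1 = l} ≃
        {z : Fin n × Fin m // z.1 = l ∧ (x.1.symm z).1 = i} :=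
      Equiv.subtypeEquiv x.1 (fun z => by
        simp only [Equiv.symm_apply_apply]
        constructor
        · rintro ⟨h1, h2⟩; exact ⟨h2, h1⟩
        · rintro ⟨h1, h2⟩; exact ⟨h2, h1⟩)
    rw [Nat.card_congr (e1.trans e2)]
    exact x.2.2 l i⟩

def fwdG (x : FibS (m := m) σ A) : G1 σ A (fwdB x) := fun i l =>
  (prodFiber (fun z => (x.1 z).1 = l) i).trans <|
    (Equiv.subtypeEquiv x.1 (fun z => by
      constructor
      · rintro ⟨h1, h2⟩
        exact ⟨h2, by rw [x.2.1 z, h1]⟩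
      · rintro ⟨h1, h2⟩
        refine ⟨σ.injective ?_, h1⟩
        rw [← x.2.1 z, h2])).trans
    (prodFiber (fun z => (x.1 z).1 = σ i) l).symm

def centralE (hs : ∀ i j, A (σ i) j = A j i) :
    FibS (m := m) σ A ≃ Σ b : BB (m := m) A, G1 σ A b where
  toFun x := ⟨fwdB x, fwdG x⟩
  invFun y := ⟨mkS y.1 y.2, mkS_mem hs y.1 y.2⟩
  left_inv x := Subtype.ext (Equiv.ext fun z => rfl)
  right_inv y := by
    obtain ⟨b, g⟩ := y
    refine Sigma.ext rfl (heq_of_eq ?_)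
    funext i l
    apply Equiv.ext
    rintro ⟨p, h⟩
    subst h
    rfl


variable (σ A)

abbrev TT := ∀ i : Fin n, Fin m ≃ Σ l : Fin n, Fin (A l i)

variable {σ A}

def tarE : TT (m := m) A ≃ Σ b : BB (m := m) A, G2 A b where
  toFun e := ⟨fun i =>
    ⟨fun p => (e i p).1, fun l => by
      have e1 : {p : Fin m // (e i p).1 = l} ≃
          {z : Σ l : Fin n, Fin (A l i) // z.1 = l} :=
        Equiv.subtypeEquiv (e i) (fun p => Iff.rfl)
      rw [Nat.card_congr (e1.trans (sigmaFst l))]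
      simp⟩,
    fun i l => (Equiv.subtypeEquiv (e i) (fun p => Iff.rfl)).trans (sigmaFst l)⟩
  invFun y := fun i =>
    (Equiv.sigmaFiberEquiv (y.1 i).1).symm.trans (Equiv.sigmaCongrRight (fun l => y.2 i l))
  left_inv e := by
    funext i
    apply Equiv.ext
    intro p
    rfl
  right_inv y := by
    obtain ⟨b, g⟩ := y
    refine Sigma.ext rfl (heq_of_eq ?_)
    funext i l
    apply Equiv.ext
    rintro ⟨p, h⟩
    subst h
    rfl

end Part3

section Count

lemma part3 (hm : 0 < m) (σ : Equiv.Perm (Fin n)) (A : Matrix (Fin n) (Fin n) ℕ)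
    (hcol : ∀ j, ∑ i, A i j = m) (hs : ∀ i j, A (σ i) j = A j i) :
    Nat.card {τ : Equiv.Perm (Fin (n * m)) //
        (∀ k, blk hm (τ (τ k)) = σ (blk hm k)) ∧ Fmap hm τ = A} =
      m.factorial ^ n := by
  classical
  -- step 1 : conjugate by Dq
  have eConj : {τ : Equiv.Perm (Fin (n * m)) //
      (∀ k, blk hm (τ (τ k)) = σ (blk hm k)) ∧ Fmap hm τ = A} ≃ FibS (m := m) σ A := by
    refine Equiv.subtypeEquiv ((Dq hm).permCongr) (fun τ => ?_)
    have hs1 : ∀ z, ((Dq hm).permCongr τ) z = Dq hm (τ ((Dq hm).symm z)) := fun z => rfl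
    have hs2 : ∀ z, ((Dq hm).permCongr τ).symm z = Dq hm (τ.symm ((Dq hm).symm z)) :=
      fun z => rfl
    constructor
    · rintro ⟨h1, h2⟩
      constructor
      · intro z
        rw [hs1, hs1, Equiv.symm_apply_apply, Dq_fst, h1, blk_Dq_symm]
      · intro i j
        have e1 : {z : Fin n × Fin m // z.1 = i ∧ (((Dq hm).permCongr τ).symm z).1 = j} ≃
            {k : Fin (n * m) // blk hm k = i ∧ blk hm (τ.symm k) = j} := by
          refine (Equiv.subtypeEquiv (Dq hm).symm (fun z => ?_))
          rw [hs2, Dq_fst, blk_Dq_symm]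
        rw [Nat.card_congr e1]
        rw [← h2]
        rfl
    · rintro ⟨h1, h2⟩
      constructor
      · intro k
        have h := h1 (Dq hm k)
        rw [hs1, hs1, Equiv.symm_apply_apply, Equiv.symm_apply_apply, Dq_fst, Dq_fst] at h
        exact h
      · funext i j
        rw [show Fmap hm τ i j =
          Nat.card {k : Fin (n * m) // blk hm k = i ∧ blk hm (τ.symm k) = j} from rfl]
        have e1 : {z : Fin n × Fin m // z.1 = i ∧ (((Dq hm).permCongr τ).symm z).1 = j} ≃
            {k : Fin (n * m) // blk hm k = i ∧ blk hm (τ.symm k) = j} := by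
          refine (Equiv.subtypeEquiv (Dq hm).symm (fun z => ?_))
          rw [hs2, Dq_fst, blk_Dq_symm]
        rw [← Nat.card_congr e1]
        exact h2 i j
  rw [Nat.card_congr (eConj.trans (centralE hs))]
  -- step 2 : exchange G1 for G2 fiberwise
  have eY : ∀ (b : BB (m := m) A) (i l : Fin n), Fb A b l (σ i) ≃ Fin (A l i) := by
    intro b i l
    refine Fintype.equivFinOfCardEq ?_
    rw [← Nat.card_eq_fintype_card]
    rw [show Nat.card (Fb A b l (σ i)) = A (σ i) l from (b l).2 (σ i), hs i l]
  have eG : ∀ b : BB (m := m) A, G1 σ A b ≃ G2 A b := fun b =>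
    Equiv.piCongrRight fun i => Equiv.piCongrRight fun l =>
      Equiv.equivCongr (Equiv.refl _) (eY b i l)
  rw [Nat.card_congr (Equiv.sigmaCongrRight eG), ← Nat.card_congr (tarE (m := m) (A := A))]
  -- step 3 : compute the cardinality of `TT`
  rw [show TT (m := m) A = ∀ i : Fin n, Fin m ≃ Σ l : Fin n, Fin (A l i) from rfl]
  rw [Nat.card_pi]
  have hcard : ∀ i : Fin n, Nat.card (Fin m ≃ Σ l : Fin n, Fin (A l i)) = m.factorial := by
    intro i
    rw [Nat.card_eq_fintype_card]
    have e : Fin m ≃ Σ l : Fin n, Fin (A l i) := by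
      refine Fintype.equivOfCardEq ?_
      simp [Fintype.card_sigma, hcol i]
    rw [Fintype.card_equiv e, Fintype.card_fin]
  calc ∏ i : Fin n, Nat.card (Fin m ≃ Σ l : Fin n, Fin (A l i))
      = ∏ _i : Fin n, m.factorial := Finset.prod_congr rfl fun i _ => hcard i
    _ = m.factorial ^ n := by simp

end Count

end Stmt4Aux

/-- for fixed `σ ∈ S_n`, the map `F` sends
`{τ ∈ S_{nm} | τ²σ⁻¹ ∈ S_m^n}` into `{A ∈ M(n,m) | σ·Aᵀ = A}`, is surjective onto that set,
and all its fibers have exactly `(m!)^n` elements. Here `τ²σ⁻¹ ∈ S_m^n` is expressed as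
`τ²` mapping the block `P_i` onto `P_{σ(i)}` for each `i`. -/
theorem stmt4 (n m : ℕ) (hm : 0 < m) (σ : Equiv.Perm (Fin n)) :
    (∀ τ : Equiv.Perm (Fin (n * m)), (∀ k, blk hm (τ (τ k)) = σ (blk hm k)) →
      ((∀ i, ∑ j, Fmap hm τ i j = m) ∧ (∀ j, ∑ i, Fmap hm τ i j = m)) ∧
        (∀ i j, (Fmap hm τ)ᵀ (σ⁻¹ i) j = Fmap hm τ i j)) ∧
    (∀ A : Matrix (Fin n) (Fin n) ℕ,
      ((∀ i, ∑ j, A i j = m) ∧ (∀ j, ∑ i, A i j = m)) → (∀ i j, Aᵀ (σ⁻¹ i) j = A i j) →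
      ∃ τ : Equiv.Perm (Fin (n * m)),
        (∀ k, blk hm (τ (τ k)) = σ (blk hm k)) ∧ Fmap hm τ = A) ∧
    (∀ A : Matrix (Fin n) (Fin n) ℕ,
      ((∀ i, ∑ j, A i j = m) ∧ (∀ j, ∑ i, A i j = m)) → (∀ i j, Aᵀ (σ⁻¹ i) j = A i j) →
      Nat.card {τ : Equiv.Perm (Fin (n * m)) //
          (∀ k, blk hm (τ (τ k)) = σ (blk hm k)) ∧ Fmap hm τ = A} =
        m.factorial ^ n) := by
  have key : ∀ A : Matrix (Fin n) (Fin n) ℕ,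
      ((∀ i, ∑ j, A i j = m) ∧ (∀ j, ∑ i, A i j = m)) → (∀ i j, Aᵀ (σ⁻¹ i) j = A i j) →
      Nat.card {τ : Equiv.Perm (Fin (n * m)) //
          (∀ k, blk hm (τ (τ k)) = σ (blk hm k)) ∧ Fmap hm τ = A} =
        m.factorial ^ n := by
    intro A hrc hsym
    have hs : ∀ i j, A (σ i) j = A j i := by
      intro i j
      have h := hsym (σ i) j
      rw [Matrix.transpose_apply, Equiv.Perm.inv_def, Equiv.symm_apply_apply] at h
      exact h.symm
    exact Stmt4Aux.part3 hm σ A hrc.2 hs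
  refine ⟨?_, ?_, key⟩
  · intro τ hb
    refine ⟨⟨Stmt4Aux.row_sum hm τ, Stmt4Aux.col_sum hm τ⟩, fun i j => ?_⟩
    rw [Matrix.transpose_apply]
    exact Stmt4Aux.symm_prop hm τ hb i j
  · intro A hrc hsym
    have hcard := key A hrc hsym
    have hne : Nonempty {τ : Equiv.Perm (Fin (n * m)) //
        (∀ k, blk hm (τ (τ k)) = σ (blk hm k)) ∧ Fmap hm τ = A} := by
      refine (Nat.card_ne_zero.mp ?_).1
      rw [hcard]
      positivity
    obtain ⟨⟨τ, h1, h2⟩⟩ := hne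
    exact ⟨τ, h1, h2⟩
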